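/- Let u : ℝ → ℝ be continuous, even, nonnegative with compact support, unit integral, and supp u ⊆ [−R,R]. Let u_ε(x)=(1/ε)u(x/ε) and F^ε = I_d[abs * u_ε]. Then F^ε(s) = ε F¹(s/ε) where F¹ = I_d[abs*u], and ‖F^ε − C_d abs‖_{L²(ℝ)}² ≤ ε³ ‖F¹ − C_d abs‖_{L²}²; in particular F^ε → C_d·abs in L²(ℝ) and pointwise as ε → 0. -/

import Mathlib

open MeasureTheory Filter

/-- Surface area of the unit sphere `S^k ⊆ ℝ^(k+1)`. -/
noncomputable def sphArea (k : ℕ) : ℝ :=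
  2 * Real.pi ^ (((k : ℝ) + 1) / 2) / Real.Gamma (((k : ℝ) + 1) / 2)

/-- The Riemann--Liouville fractional integral operator `I_d`. -/
noncomputable def RL (d : ℕ) (f : ℝ → ℝ) (s : ℝ) : ℝ :=
  (2 * sphArea (d - 2) / sphArea (d - 1)) *
    ∫ t in (0:ℝ)..1, f (t * s) * (1 - t ^ 2) ^ (((d : ℝ) - 3) / 2)

/-- The constant `C_d = Γ(d/2)/(√π Γ((d+1)/2))`. -/
noncomputable def Cd (d : ℕ) : ℝ :=
  Real.Gamma ((d : ℝ) / 2) / (Real.sqrt Real.pi * Real.Gamma (((d : ℝ) + 1) / 2))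

/-! ### Auxiliary lemmas -/

lemma conv_scale (u : ℝ → ℝ) {ε : ℝ} (hε : 0 < ε) (x : ℝ) :
    (∫ y, |x - y| * ((1 / ε) * u (y / ε))) = ε * ∫ z, |x / ε - z| * u z := by
  have hne : ε ≠ 0 := hε.ne'
  have h1 : (fun y : ℝ => |x - y| * ((1 / ε) * u (y / ε)))
      = fun y : ℝ => (fun z : ℝ => |x / ε - z| * u z) (y / ε) := by
    funext y
    simp only
    have h2 : |x / ε - y / ε| = |x - y| / ε := by
      rw [div_sub_div_same, abs_div, abs_of_pos hε]
    rw [h2]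
    field_simp
  rw [h1, MeasureTheory.Measure.integral_comp_div (fun z => |x / ε - z| * u z) ε,
    abs_of_pos hε, smul_eq_mul]

lemma integrable_w (d : ℕ) (hd : 2 ≤ d) :
    IntervalIntegrable (fun t : ℝ => (1 - t ^ 2) ^ (((d : ℝ) - 3) / 2)) volume 0 1 := by
  have hd2 : (2:ℝ) ≤ (d:ℝ) := by exact_mod_cast hd
  have hα : (-1:ℝ) < ((d : ℝ) - 3) / 2 := by linarith
  have h1 : IntervalIntegrable (fun t : ℝ => ((1:ℝ) - t) ^ (((d : ℝ) - 3) / 2)) volume 0 1 := by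
    have := (intervalIntegral.intervalIntegrable_rpow' (a := 0) (b := 1) hα).comp_sub_left 1
    simpa using this.symm
  have h2 : ContinuousOn (fun t : ℝ => ((1:ℝ) + t) ^ (((d : ℝ) - 3) / 2)) (Set.uIcc 0 1) := by
    apply ContinuousOn.rpow_const (by fun_prop)
    intro t ht
    rw [Set.uIcc_of_le (by norm_num : (0:ℝ) ≤ 1)] at ht
    exact Or.inl (by nlinarith [ht.1])
  apply (h1.continuousOn_mul h2).congr
  intro t ht
  dsimp only
  rw [Set.uIoc_of_le (by norm_num : (0:ℝ) ≤ 1)] at ht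
  rw [← Real.mul_rpow (by linarith [ht.1.le] : (0:ℝ) ≤ 1 + t) (by linarith [ht.2] : (0:ℝ) ≤ 1 - t)]
  congr 1
  ring

lemma integral_t_w (d : ℕ) (hd : 2 ≤ d) :
    ∫ t in (0:ℝ)..1, t * (1 - t ^ 2) ^ (((d : ℝ) - 3) / 2) = 1 / ((d : ℝ) - 1) := by
  have hd2 : (2:ℝ) ≤ (d:ℝ) := by exact_mod_cast hd
  have hβ0 : (0:ℝ) < ((d : ℝ) - 1) / 2 := by linarith
  have hd1 : (d:ℝ) - 1 ≠ 0 := by linarith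
  have hcont : ContinuousOn
      (fun t : ℝ => -((d:ℝ) - 1)⁻¹ * (1 - t ^ 2) ^ (((d : ℝ) - 1) / 2)) (Set.Icc 0 1) := by
    apply ContinuousOn.mul continuousOn_const
    exact ContinuousOn.rpow_const (by fun_prop) (fun x _ => Or.inr hβ0.le)
  have hderiv : ∀ x ∈ Set.Ioo (0:ℝ) 1,
      HasDerivWithinAt (fun t : ℝ => -((d:ℝ) - 1)⁻¹ * (1 - t ^ 2) ^ (((d : ℝ) - 1) / 2))
        (x * (1 - x ^ 2) ^ (((d : ℝ) - 3) / 2)) (Set.Ioi x) x := by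
    intro x hx
    have hbase : (1:ℝ) - x ^ 2 ≠ 0 := by nlinarith [hx.1, hx.2]
    have h1 : HasDerivAt (fun t : ℝ => 1 - t ^ 2) (-(2 * x ^ 1)) x :=
      (hasDerivAt_pow 2 x).const_sub 1
    have h2 := (h1.rpow_const (p := ((d : ℝ) - 1) / 2) (Or.inl hbase)).const_mul
      (-((d:ℝ) - 1)⁻¹)
    have heq : -((d:ℝ) - 1)⁻¹ * (-(2 * x ^ 1) * (((d : ℝ) - 1) / 2) *
        (1 - x ^ 2) ^ (((d : ℝ) - 1) / 2 - 1)) = x * (1 - x ^ 2) ^ (((d : ℝ) - 3) / 2) := by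
      rw [show ((d : ℝ) - 1) / 2 - 1 = ((d : ℝ) - 3) / 2 by ring]
      field_simp
    rw [heq] at h2
    exact h2.hasDerivWithinAt
  have hint : IntervalIntegrable (fun t : ℝ => t * (1 - t ^ 2) ^ (((d : ℝ) - 3) / 2))
      volume 0 1 := (integrable_w d hd).continuousOn_mul (by fun_prop)
  rw [intervalIntegral.integral_eq_sub_of_hasDeriv_right_of_le (by norm_num) hcont hderiv hint]
  norm_num
  exact Or.inr (Real.zero_rpow hβ0.ne')

lemma const_eq (d : ℕ) (hd : 2 ≤ d) :
    2 * sphArea (d - 2) / sphArea (d - 1) * (1 / ((d : ℝ) - 1)) = Cd d := by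
  have hd2 : (2:ℝ) ≤ (d:ℝ) := by exact_mod_cast hd
  have hd1 : (d:ℝ) - 1 ≠ 0 := by linarith
  have hc2 : ((d - 2 : ℕ) : ℝ) = (d : ℝ) - 2 := by
    push_cast [Nat.cast_sub hd]; ring
  have hc1 : ((d - 1 : ℕ) : ℝ) = (d : ℝ) - 1 := by
    push_cast [Nat.cast_sub (le_trans one_le_two hd)]; ring
  rw [sphArea, sphArea, Cd, hc2, hc1,
    show ((d:ℝ) - 2 + 1) / 2 = ((d:ℝ) - 1) / 2 by ring,
    show ((d:ℝ) - 1 + 1) / 2 = (d:ℝ) / 2 by ring,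
    show ((d:ℝ) + 1) / 2 = ((d:ℝ) - 1) / 2 + 1 by ring]
  have hx : (0:ℝ) < ((d:ℝ) - 1) / 2 := by linarith
  have hG1 : 0 < Real.Gamma (((d:ℝ) - 1) / 2) := Real.Gamma_pos_of_pos hx
  have hG2 : 0 < Real.Gamma ((d:ℝ) / 2) := Real.Gamma_pos_of_pos (by linarith)
  rw [Real.Gamma_add_one hx.ne',
    show (d:ℝ) / 2 = ((d:ℝ) - 1) / 2 + 1 / 2 by ring,
    Real.rpow_add Real.pi_pos, ← Real.sqrt_eq_rpow]
  have hπ1 : (0:ℝ) < Real.pi ^ (((d:ℝ) - 1) / 2) := Real.rpow_pos_of_pos Real.pi_pos _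
  have hπ2 : (0:ℝ) < Real.sqrt Real.pi := Real.sqrt_pos.mpr Real.pi_pos
  field_simp

lemma f1_cont (u : ℝ → ℝ) (hcont : Continuous u) (hnonneg : ∀ x, 0 ≤ u x)
    (hsupp : HasCompactSupport u) (hint : ∫ x, u x = 1) :
    Continuous (fun x : ℝ => ∫ y, |x - y| * u y) := by
  have hiu : Integrable u := hcont.integrable_of_hasCompactSupport hsupp
  have hix : ∀ x : ℝ, Integrable (fun y => |x - y| * u y) := fun x =>
    (((continuous_const.sub continuous_id).abs).mul hcont).integrable_of_hasCompactSupport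
      hsupp.mul_left
  have : LipschitzWith 1 (fun x : ℝ => ∫ y, |x - y| * u y) := by
    apply LipschitzWith.of_dist_le_mul
    intro x x'
    rw [Real.dist_eq, Real.dist_eq, ← integral_sub (hix x) (hix x')]
    simp only [NNReal.coe_one, one_mul]
    calc |∫ y, (|x - y| * u y - |x' - y| * u y)|
        ≤ ∫ y, |(|x - y| * u y - |x' - y| * u y)| := by
          simpa [Real.norm_eq_abs] using
            norm_integral_le_integral_norm (μ := volume) (fun y => |x - y| * u y - |x' - y| * u y)
      _ ≤ ∫ y, |x - x'| * u y := by
          apply integral_mono ((hix x).sub (hix x')).abs (hiu.const_mul _)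
          intro y
          simp only [Pi.sub_apply]
          rw [← sub_mul, abs_mul, abs_of_nonneg (hnonneg y)]
          have h := abs_abs_sub_abs_le_abs_sub (x - y) (x' - y)
          have h2 : x - y - (x' - y) = x - x' := by ring
          rw [h2] at h
          exact mul_le_mul_of_nonneg_right h (hnonneg y)
      _ = |x - x'| := by rw [MeasureTheory.integral_const_mul, hint, mul_one]
  simpa using this.continuous

lemma f1_near (u : ℝ → ℝ) (hcont : Continuous u) (hnonneg : ∀ x, 0 ≤ u x)
    (hsupp : HasCompactSupport u) (hint : ∫ x, u x = 1) :
    ∀ x : ℝ, abs ((∫ y, |x - y| * u y) - |x|) ≤ ∫ y, |y| * u y := by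
  intro x
  have hiu : Integrable u := hcont.integrable_of_hasCompactSupport hsupp
  have hix : Integrable (fun y => |x - y| * u y) :=
    (((continuous_const.sub continuous_id).abs).mul hcont).integrable_of_hasCompactSupport
      hsupp.mul_left
  have hiy : Integrable (fun y : ℝ => |y| * u y) :=
    (continuous_abs.mul hcont).integrable_of_hasCompactSupport hsupp.mul_left
  have h1 : |x| = ∫ y, |x| * u y := by rw [MeasureTheory.integral_const_mul, hint, mul_one]
  rw [h1, ← integral_sub hix (hiu.const_mul _)]
  calc abs (∫ y, (|x - y| * u y - |x| * u y))
      ≤ ∫ y, |(|x - y| * u y - |x| * u y)| := by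
        simpa [Real.norm_eq_abs] using
          norm_integral_le_integral_norm (μ := volume) (fun y => |x - y| * u y - |x| * u y)
    _ ≤ ∫ y, |y| * u y := by
        apply integral_mono (hix.sub (hiu.const_mul _)).abs hiy
        intro y
        simp only [Pi.sub_apply]
        rw [← sub_mul, abs_mul, abs_of_nonneg (hnonneg y)]
        have h := abs_abs_sub_abs_le_abs_sub (x - y) x
        have h2 : |x - y - x| = |y| := by rw [show x - y - x = -y by ring, abs_neg]
        rw [h2] at h
        exact mul_le_mul_of_nonneg_right h (hnonneg y)

lemma RL_bound (d : ℕ) (hd : 2 ≤ d) (u : ℝ → ℝ) (hcont : Continuous u)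
    (hnonneg : ∀ x, 0 ≤ u x) (hsupp : HasCompactSupport u) (hint : ∫ x, u x = 1)
    (s : ℝ) {ε : ℝ} (hε : 0 < ε) :
    abs (RL d (fun x => ∫ y, |x - y| * ((1 / ε) * u (y / ε))) s - Cd d * |s|)
      ≤ (|2 * sphArea (d - 2) / sphArea (d - 1)| * ((|∫ y, |y| * u y|) *
          |∫ t in (0:ℝ)..1, (1 - t ^ 2) ^ (((d : ℝ) - 3) / 2)|)) * ε := by
  have hf1c := f1_cont u hcont hnonneg hsupp hint
  have habs_eq : Cd d * |s| = (2 * sphArea (d - 2) / sphArea (d - 1)) *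
      ∫ t in (0:ℝ)..1, (t * |s|) * (1 - t ^ 2) ^ (((d : ℝ) - 3) / 2) := by
    rw [show (fun t : ℝ => (t * |s|) * (1 - t ^ 2) ^ (((d : ℝ) - 3) / 2))
        = fun t : ℝ => |s| * (t * (1 - t ^ 2) ^ (((d : ℝ) - 3) / 2)) from funext fun t => by ring,
      intervalIntegral.integral_const_mul, integral_t_w d hd, ← const_eq d hd]
    ring
  have hfc : Continuous (fun x : ℝ => ∫ y, |x - y| * ((1 / ε) * u (y / ε))) := by
    have h : (fun x : ℝ => ∫ y, |x - y| * ((1 / ε) * u (y / ε)))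
        = fun x : ℝ => ε * ((fun z => ∫ y, |z - y| * u y) (x / ε)) := by
      funext x; exact conv_scale u hε x
    rw [h]
    exact continuous_const.mul (hf1c.comp (continuous_id.div_const ε))
  have hI1 : IntervalIntegrable (fun t : ℝ =>
      (∫ y, |t * s - y| * ((1 / ε) * u (y / ε))) * (1 - t ^ 2) ^ (((d : ℝ) - 3) / 2))
      volume 0 1 :=
    (integrable_w d hd).continuousOn_mul
      ((hfc.comp (continuous_id.mul continuous_const)).continuousOn)
  have hI2 : IntervalIntegrable (fun t : ℝ => (t * |s|) * (1 - t ^ 2) ^ (((d : ℝ) - 3) / 2))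
      volume 0 1 :=
    (integrable_w d hd).continuousOn_mul (by fun_prop)
  rw [RL, habs_eq, ← mul_sub, abs_mul, ← intervalIntegral.integral_sub hI1 hI2]
  have hptw : ∀ᵐ t ∂(volume.restrict (Set.uIoc (0:ℝ) 1)),
      ‖(∫ y, |t * s - y| * ((1 / ε) * u (y / ε))) * (1 - t ^ 2) ^ (((d : ℝ) - 3) / 2)
        - (t * |s|) * (1 - t ^ 2) ^ (((d : ℝ) - 3) / 2)‖
      ≤ (ε * |∫ y, |y| * u y|) * (1 - t ^ 2) ^ (((d : ℝ) - 3) / 2) := by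
    filter_upwards [ae_restrict_mem measurableSet_uIoc] with t ht
    rw [Set.uIoc_of_le (by norm_num : (0:ℝ) ≤ 1)] at ht
    have hw0 : (0:ℝ) ≤ (1 - t ^ 2) ^ (((d : ℝ) - 3) / 2) :=
      Real.rpow_nonneg (by nlinarith [ht.1.le, ht.2]) _
    rw [← sub_mul, Real.norm_eq_abs, abs_mul, abs_of_nonneg hw0]
    refine mul_le_mul_of_nonneg_right ?_ hw0
    have hts : t * |s| = |t * s| := by rw [abs_mul, abs_of_nonneg ht.1.le]
    rw [hts, conv_scale u hε]
    have h3 : |t * s| = ε * |t * s / ε| := by rw [abs_div, abs_of_pos hε]; field_simp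
    rw [h3, ← mul_sub, abs_mul, abs_of_pos hε]
    calc ε * abs ((∫ y, |t * s / ε - y| * u y) - |t * s / ε|)
        ≤ ε * ∫ y, |y| * u y :=
          mul_le_mul_of_nonneg_left (f1_near u hcont hnonneg hsupp hint (t * s / ε)) hε.le
      _ ≤ ε * |∫ y, |y| * u y| := mul_le_mul_of_nonneg_left (le_abs_self _) hε.le
  have h4 := intervalIntegral.norm_integral_le_abs_of_norm_le hptw
    ((integrable_w d hd).const_mul (ε * |∫ y, |y| * u y|))
  rw [Real.norm_eq_abs, intervalIntegral.integral_const_mul] at h4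
  calc |2 * sphArea (d - 2) / sphArea (d - 1)| *
        abs (∫ t in (0:ℝ)..1, ((∫ y, |t * s - y| * ((1 / ε) * u (y / ε))) *
            (1 - t ^ 2) ^ (((d : ℝ) - 3) / 2)
          - (t * |s|) * (1 - t ^ 2) ^ (((d : ℝ) - 3) / 2)))
      ≤ |2 * sphArea (d - 2) / sphArea (d - 1)| *
        |(ε * |∫ y, |y| * u y|) * ∫ t in (0:ℝ)..1, (1 - t ^ 2) ^ (((d : ℝ) - 3) / 2)| :=
        mul_le_mul_of_nonneg_left h4 (abs_nonneg _)
    _ = (|2 * sphArea (d - 2) / sphArea (d - 1)| * ((|∫ y, |y| * u y|) *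
          |∫ t in (0:ℝ)..1, (1 - t ^ 2) ^ (((d : ℝ) - 3) / 2)|)) * ε := by
        rw [abs_mul, abs_mul, abs_of_pos hε, abs_abs]
        ring

theorem stmt_15 (d : ℕ) (hd : 2 ≤ d) (u : ℝ → ℝ) (hcont : Continuous u)
    (heven : ∀ x, u (-x) = u x) (hnonneg : ∀ x, 0 ≤ u x)
    (hsupp : HasCompactSupport u) (hint : ∫ x, u x = 1)
    (R : ℝ) (hR : Function.support u ⊆ Set.Icc (-R) R) :
    (∀ ε : ℝ, 0 < ε →
      (∀ s : ℝ, RL d (fun x => ∫ y, |x - y| * ((1 / ε) * u (y / ε))) s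
          = ε * RL d (fun x => ∫ y, |x - y| * u y) (s / ε)) ∧
      (∫ s : ℝ, (RL d (fun x => ∫ y, |x - y| * ((1 / ε) * u (y / ε))) s - Cd d * |s|) ^ 2)
        ≤ ε ^ 3 * ∫ s : ℝ, (RL d (fun x => ∫ y, |x - y| * u y) s - Cd d * |s|) ^ 2) ∧
    Tendsto (fun ε : ℝ =>
        ∫ s : ℝ, (RL d (fun x => ∫ y, |x - y| * ((1 / ε) * u (y / ε))) s - Cd d * |s|) ^ 2)
      (nhdsWithin 0 (Set.Ioi 0)) (nhds 0) ∧
    (∀ s : ℝ, Tendsto (fun ε : ℝ =>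
        RL d (fun x => ∫ y, |x - y| * ((1 / ε) * u (y / ε))) s)
      (nhdsWithin 0 (Set.Ioi 0)) (nhds (Cd d * |s|))) := by
  have hpart1 : ∀ ε : ℝ, 0 < ε → ∀ s : ℝ,
      RL d (fun x => ∫ y, |x - y| * ((1 / ε) * u (y / ε))) s
        = ε * RL d (fun x => ∫ y, |x - y| * u y) (s / ε) := by
    intro ε hε s
    rw [RL, RL]
    have h1 : (fun t : ℝ => (∫ y, |t * s - y| * ((1 / ε) * u (y / ε))) *
          (1 - t ^ 2) ^ (((d : ℝ) - 3) / 2))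
        = fun t : ℝ => ε * ((∫ y, |t * (s / ε) - y| * u y) *
          (1 - t ^ 2) ^ (((d : ℝ) - 3) / 2)) := by
      funext t
      rw [conv_scale u hε, mul_div_assoc]
      ring
    rw [h1, intervalIntegral.integral_const_mul]
    ring
  have hL2 : ∀ ε : ℝ, 0 < ε →
      (∫ s : ℝ, (RL d (fun x => ∫ y, |x - y| * ((1 / ε) * u (y / ε))) s - Cd d * |s|) ^ 2)
        = ε ^ 3 * ∫ s : ℝ, (RL d (fun x => ∫ y, |x - y| * u y) s - Cd d * |s|) ^ 2 := by
    intro ε hε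
    have h1 : (fun s : ℝ =>
          (RL d (fun x => ∫ y, |x - y| * ((1 / ε) * u (y / ε))) s - Cd d * |s|) ^ 2)
        = fun s : ℝ => (fun σ : ℝ =>
          ε ^ 2 * (RL d (fun x => ∫ y, |x - y| * u y) σ - Cd d * |σ|) ^ 2) (s / ε) := by
      funext s
      simp only
      rw [hpart1 ε hε s, show |s| = ε * |s / ε| by rw [abs_div, abs_of_pos hε]; field_simp]
      ring
    rw [h1, MeasureTheory.Measure.integral_comp_div
        (fun σ : ℝ => ε ^ 2 * (RL d (fun x => ∫ y, |x - y| * u y) σ - Cd d * |σ|) ^ 2) ε,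
      abs_of_pos hε, smul_eq_mul, MeasureTheory.integral_const_mul]
    ring
  refine ⟨fun ε hε => ⟨hpart1 ε hε, le_of_eq (hL2 ε hε)⟩, ?_, ?_⟩
  · have h0 : Tendsto (fun ε : ℝ => ε ^ 3 *
        ∫ s : ℝ, (RL d (fun x => ∫ y, |x - y| * u y) s - Cd d * |s|) ^ 2)
        (nhdsWithin 0 (Set.Ioi 0)) (nhds 0) := by
      have h := ((continuous_pow 3).mul
        (continuous_const : Continuous fun _ : ℝ =>
          (∫ s : ℝ, (RL d (fun x => ∫ y, |x - y| * u y) s - Cd d * |s|) ^ 2))).tendsto 0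
      simp only [Pi.mul_apply, zero_pow, zero_mul, ne_eq, OfNat.ofNat_ne_zero, not_false_eq_true] at h
      exact h.mono_left nhdsWithin_le_nhds
    apply h0.congr'
    filter_upwards [self_mem_nhdsWithin] with ε hε
    exact (hL2 ε hε).symm
  · intro s
    have hsq : Tendsto (fun ε : ℝ =>
        RL d (fun x => ∫ y, |x - y| * ((1 / ε) * u (y / ε))) s - Cd d * |s|)
        (nhdsWithin 0 (Set.Ioi 0)) (nhds 0) := by
      apply squeeze_zero_norm' (a := fun ε : ℝ =>
        (|2 * sphArea (d - 2) / sphArea (d - 1)| * ((|∫ y, |y| * u y|) *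
          |∫ t in (0:ℝ)..1, (1 - t ^ 2) ^ (((d : ℝ) - 3) / 2)|)) * ε)
      · filter_upwards [self_mem_nhdsWithin] with ε hε
        rw [Real.norm_eq_abs]
        exact RL_bound d hd u hcont hnonneg hsupp hint s hε
      · have h := ((continuous_const : Continuous fun _ : ℝ =>
            (|2 * sphArea (d - 2) / sphArea (d - 1)| * ((|∫ y, |y| * u y|) *
              |∫ t in (0:ℝ)..1, (1 - t ^ 2) ^ (((d : ℝ) - 3) / 2)|))).mul
            continuous_id).tendsto (0:ℝ)
        simp only [Pi.mul_apply, mul_zero, id_eq] at h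
        exact h.mono_left nhdsWithin_le_nhds
    exact tendsto_sub_nhds_zero_iff.mp hsq
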